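/- Let D_L = ⌈L/C⌉ with C = (1 − c)/(1 − c^m), c = (k+t−1)/n ∈ (0,1), and subpacketization L = β(n−k−t+1) for a positive integer β. Then D_L = βn − ⌊βn·c^m⌋. In particular D_L = βn (the asymptotic download cost is attained) if and only if β < n^{m−1}/(k+t−1)^m, equivalently m > (log n + log β)/(log n − log(k+t−1)). -/

import Mathlib

/-- Download cost `D_L = ⌈L/C⌉` for subpacketization `L = β(n-k-t+1)` and capacity
`C = (1-c)/(1-c^m)`, `c = (k+t-1)/n`: it equals `βn - ⌊βn·c^m⌋`, and the asymptotic
download cost `βn` is attained iff `β < n^{m-1}/(k+t-1)^m`, equivalently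
`m > (log n + log β)/(log n - log(k+t-1))`. -/
theorem download_cost_asymptotic {n k t m β : ℕ} (hk : 1 ≤ k) (ht : 1 ≤ t)
    (hn : k + t - 1 < n) (hm : 2 ≤ m) (hβ : 1 ≤ β) :
    (⌈((β : ℝ) * ((n : ℝ) - (k : ℝ) - (t : ℝ) + 1)) /
        ((1 - ((k + t - 1 : ℕ) : ℝ) / n) / (1 - (((k + t - 1 : ℕ) : ℝ) / n) ^ m))⌉
      = (β * n : ℕ) - ⌊((β : ℝ) * (n : ℝ)) * (((k + t - 1 : ℕ) : ℝ) / n) ^ m⌋) ∧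
    (⌈((β : ℝ) * ((n : ℝ) - (k : ℝ) - (t : ℝ) + 1)) /
        ((1 - ((k + t - 1 : ℕ) : ℝ) / n) / (1 - (((k + t - 1 : ℕ) : ℝ) / n) ^ m))⌉
        = (β * n : ℕ)
      ↔ (β : ℝ) < (n : ℝ) ^ (m - 1) / ((k + t - 1 : ℕ) : ℝ) ^ m) ∧
    ((β : ℝ) < (n : ℝ) ^ (m - 1) / ((k + t - 1 : ℕ) : ℝ) ^ m
      ↔ (m : ℝ) > (Real.log n + Real.log β) /
          (Real.log n - Real.log ((k + t - 1 : ℕ) : ℝ))) := by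
  have hKcast : ((k + t - 1 : ℕ) : ℝ) = (k : ℝ) + t - 1 := by
    have : 1 ≤ k + t := by omega
    push_cast [Nat.cast_sub this]
    ring
  set K := ((k + t - 1 : ℕ) : ℝ) with hKdef
  have hK1 : (1:ℝ) ≤ K := by
    rw [hKdef]; exact_mod_cast Nat.one_le_iff_ne_zero.mpr (by omega)
  have hKn : K < n := by rw [hKdef]; exact_mod_cast hn
  have hn0 : (0:ℝ) < n := lt_of_le_of_lt (by linarith) hKn
  have hK0 : (0:ℝ) < K := by linarith
  set c : ℝ := K / n with hc
  have hc0 : 0 < c := div_pos hK0 hn0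
  have hc1 : c < 1 := (div_lt_one hn0).mpr hKn
  have hcm1 : c ^ m < 1 := pow_lt_one₀ hc0.le hc1 (by omega)
  have hcm0 : 0 < c ^ m := pow_pos hc0 m
  have hβ0 : (0:ℝ) < β := by exact_mod_cast hβ
  -- simplify the ceil argument
  have hexpr : ((β : ℝ) * ((n : ℝ) - (k : ℝ) - (t : ℝ) + 1)) /
        ((1 - c) / (1 - c ^ m)) = (β:ℝ) * n - (β:ℝ) * n * c ^ m := by
    have h1 : (n:ℝ) - k - t + 1 = n - K := by rw [hKcast]; ring
    have h2 : (n:ℝ) - K = n * (1 - c) := by rw [hc]; field_simp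
    have hne : (1:ℝ) - c ≠ 0 := by linarith
    have hne2 : (1:ℝ) - c ^ m ≠ 0 := by linarith
    rw [h1, h2, div_div_eq_mul_div, div_eq_iff hne]
    ring
  have hx0 : 0 ≤ (β:ℝ) * n * c ^ m := by positivity
  have hceil : ⌈(β:ℝ) * n - (β:ℝ) * n * c ^ m⌉ = (β * n : ℕ) - ⌊(β:ℝ) * n * c ^ m⌋ := by
    have : (β:ℝ) * n - (β:ℝ) * n * c ^ m = (-((β:ℝ) * n * c ^ m)) + ((β * n : ℕ) : ℤ) := by
      push_cast; ring
    rw [this, Int.ceil_add_intCast, Int.ceil_neg]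
    ring
  have part1 : ⌈((β : ℝ) * ((n : ℝ) - (k : ℝ) - (t : ℝ) + 1)) /
        ((1 - c) / (1 - c ^ m))⌉ = (β * n : ℕ) - ⌊(β:ℝ) * n * c ^ m⌋ := by
    rw [hexpr, hceil]
  -- x < 1 equivalence
  have hx_eq : (β:ℝ) * n * c ^ m = (β:ℝ) * K ^ m / (n:ℝ) ^ (m - 1) := by
    rw [hc, div_pow]
    have : (n:ℝ) ^ m = (n:ℝ) ^ (m - 1) * n := by
      rw [← pow_succ]; congr 1; omega
    rw [this]
    field_simp
  have hiff1 : (β:ℝ) * n * c ^ m < 1 ↔ (β : ℝ) < (n : ℝ) ^ (m - 1) / K ^ m := by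
    rw [hx_eq, div_lt_one (by positivity), lt_div_iff₀ (by positivity)]
  have part2 : (⌈((β : ℝ) * ((n : ℝ) - (k : ℝ) - (t : ℝ) + 1)) /
        ((1 - c) / (1 - c ^ m))⌉ = (β * n : ℕ)) ↔
      (β : ℝ) < (n : ℝ) ^ (m - 1) / K ^ m := by
    rw [part1, ← hiff1]
    constructor
    · intro h
      have hfl : ⌊(β:ℝ) * n * c ^ m⌋ = 0 := by omega
      have := Int.lt_floor_add_one ((β:ℝ) * n * c ^ m)
      rw [hfl] at this; push_cast at this; linarith
    · intro h
      have : ⌊(β:ℝ) * n * c ^ m⌋ = 0 := Int.floor_eq_zero_iff.mpr ⟨hx0, h⟩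
      omega
  -- log equivalence
  have hlogd : 0 < Real.log n - Real.log K := by
    have := Real.log_lt_log hK0 hKn
    linarith
  have part3 : ((β : ℝ) < (n : ℝ) ^ (m - 1) / K ^ m
      ↔ (m : ℝ) > (Real.log n + Real.log β) / (Real.log n - Real.log K)) := by
    rw [gt_iff_lt, div_lt_iff₀ hlogd]
    rw [show (β:ℝ) < (n:ℝ) ^ (m-1) / K ^ m ↔
        Real.log β < Real.log ((n:ℝ) ^ (m-1) / K ^ m) from
      (Real.log_lt_log_iff hβ0 (by positivity)).symm]
    rw [Real.log_div (by positivity) (by positivity), Real.log_pow, Real.log_pow]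
    have hm1 : ((m - 1 : ℕ) : ℝ) = (m : ℝ) - 1 := by
      have : 1 ≤ m := by omega
      push_cast [Nat.cast_sub this]; ring
    rw [hm1]
    constructor <;> intro h <;> nlinarith
  exact ⟨part1, part2, part3⟩
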